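/- For positive definite matrices u and v of the same size, the geometric mean is symmetric: v^{1/2}(v^{-1/2} u v^{-1/2})^{1/2} v^{1/2} = u^{1/2}(u^{-1/2} v u^{-1/2})^{1/2} u^{1/2}. -/

import Mathlib

open Matrix
open scoped Classical

/-- The principal symmetric positive semidefinite square root of a matrix
(junk value `0` if the matrix is not positive semidefinite). -/
noncomputable def psqrt {d : ℕ} (A : Matrix (Fin d) (Fin d) ℝ) : Matrix (Fin d) (Fin d) ℝ :=
  if h : A.PosSemidef then
    (h.1.eigenvectorUnitary : Matrix (Fin d) (Fin d) ℝ) *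
      diagonal (fun i => Real.sqrt (h.1.eigenvalues i)) *
      (star h.1.eigenvectorUnitary : Matrix (Fin d) (Fin d) ℝ)
  else 0

open scoped MatrixOrder

lemma psqrt_of_posSemidef {d : ℕ} {A : Matrix (Fin d) (Fin d) ℝ} (h : A.PosSemidef) :
    psqrt A = CFC.sqrt A := by
  rw [CFC.sqrt_eq_real_sqrt A h.nonneg, cfcₙ_eq_cfc, h.1.cfc_eq, psqrt, dif_pos h]
  simp [IsHermitian.cfc, Unitary.conjStarAlgAut_apply, Function.comp_def]

lemma psqrt_mul_self {d : ℕ} {A : Matrix (Fin d) (Fin d) ℝ} (h : A.PosSemidef) :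
    psqrt A * psqrt A = A := by
  rw [psqrt_of_posSemidef h]; exact CFC.sqrt_mul_sqrt_self A h.nonneg

lemma isUnit_psqrt {d : ℕ} {A : Matrix (Fin d) (Fin d) ℝ} (h : IsUnit A.det)
    (hA : A.PosSemidef) : IsUnit (psqrt A).det := by
  rw [isUnit_iff_ne_zero]
  intro hdet
  have hd : A.det = 0 := by
    rw [← psqrt_mul_self hA, Matrix.det_mul, hdet, mul_zero]
  exact h.ne_zero hd

lemma psqrt_isHermitian {d : ℕ} {A : Matrix (Fin d) (Fin d) ℝ} (h : A.PosSemidef) :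
    (psqrt A)ᴴ = psqrt A := by
  rw [psqrt_of_posSemidef h]; exact (CFC.sqrt_nonneg A).posSemidef.1

/-- Uniqueness: a PosSemidef solution of the Riccati equation `X u⁻¹ X = v`
equals the geometric mean of `u` and `v`. -/
lemma eq_geom_of_riccati {d : ℕ} {u v X : Matrix (Fin d) (Fin d) ℝ}
    (hu : u.PosDef) (hv : v.PosSemidef) (hX : X.PosSemidef)
    (hric : X * u⁻¹ * X = v) :
    X = psqrt u * psqrt ((psqrt u)⁻¹ * v * (psqrt u)⁻¹) * psqrt u := by
  set a := psqrt u with ha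
  have hadet : IsUnit a.det := isUnit_psqrt hu.det_pos.ne'.isUnit hu.posSemidef
  have haH : aᴴ = a := psqrt_isHermitian hu.posSemidef
  have haiH : (a⁻¹)ᴴ = a⁻¹ := by rw [Matrix.conjTranspose_nonsing_inv, haH]
  have haa : a * a = u := psqrt_mul_self hu.posSemidef
  have hY : (a⁻¹ * X * a⁻¹).PosSemidef := by
    have := hX.mul_mul_conjTranspose_same a⁻¹
    rwa [haiH] at this
  have hn : ((psqrt u)⁻¹ * v * (psqrt u)⁻¹).PosSemidef := by
    have := hv.mul_mul_conjTranspose_same a⁻¹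
    rwa [haiH] at this
  have hsq : (a⁻¹ * X * a⁻¹) ^ 2 = (psqrt u)⁻¹ * v * (psqrt u)⁻¹ := by
    have hui : u⁻¹ = a⁻¹ * a⁻¹ := by rw [← haa, Matrix.mul_inv_rev]
    rw [pow_two, ← hric, hui]
    simp only [Matrix.mul_assoc, ← ha]
  have key : a⁻¹ * X * a⁻¹ = psqrt ((psqrt u)⁻¹ * v * (psqrt u)⁻¹) := by
    rw [psqrt_of_posSemidef hn]
    exact ((CFC.sqrt_eq_iff _ _ hn.nonneg hY.nonneg).mpr (by rw [← sq]; exact hsq)).symm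
  rw [← key,
    show a * (a⁻¹ * X * a⁻¹) * a = a * a⁻¹ * X * (a⁻¹ * a) from by
      simp only [Matrix.mul_assoc],
    Matrix.mul_nonsing_inv _ hadet, Matrix.nonsing_inv_mul _ hadet,
    Matrix.one_mul, Matrix.mul_one]

/-- For positive definite matrices `u` and `v`, the geometric mean is symmetric:
`v^{1/2} (v^{-1/2} u v^{-1/2})^{1/2} v^{1/2} = u^{1/2} (u^{-1/2} v u^{-1/2})^{1/2} u^{1/2}`. -/
theorem geometric_mean_symm {d : ℕ} (u v : Matrix (Fin d) (Fin d) ℝ)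
    (hu : u.PosDef) (hv : v.PosDef) :
    psqrt v * psqrt ((psqrt v)⁻¹ * u * (psqrt v)⁻¹) * psqrt v =
      psqrt u * psqrt ((psqrt u)⁻¹ * v * (psqrt u)⁻¹) * psqrt u := by
  set b := psqrt v with hb
  have hbdet : IsUnit b.det := isUnit_psqrt hv.det_pos.ne'.isUnit hv.posSemidef
  have hbH : bᴴ = b := psqrt_isHermitian hv.posSemidef
  have hbiH : (b⁻¹)ᴴ = b⁻¹ := by rw [Matrix.conjTranspose_nonsing_inv, hbH]
  have hbb : b * b = v := psqrt_mul_self hv.posSemidef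
  have hm : (b⁻¹ * u * b⁻¹).PosSemidef := by
    have := hu.posSemidef.mul_mul_conjTranspose_same b⁻¹
    rwa [hbiH] at this
  have hmdet : IsUnit (b⁻¹ * u * b⁻¹).det := by
    rw [Matrix.det_mul, Matrix.det_mul]
    have hbi : IsUnit (b⁻¹).det :=
      (Matrix.isUnit_iff_isUnit_det _).mp
        (Matrix.isUnit_nonsing_inv_iff.mpr ((Matrix.isUnit_iff_isUnit_det b).mpr hbdet))
    exact (hbi.mul hu.det_pos.ne'.isUnit).mul hbi
  set s := psqrt (b⁻¹ * u * b⁻¹) with hs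
  have hsPSD : s.PosSemidef := by
    rw [hs, psqrt_of_posSemidef hm]; exact (CFC.sqrt_nonneg _).posSemidef
  have hss : s * s = b⁻¹ * u * b⁻¹ := psqrt_mul_self hm
  have hsdet : IsUnit s.det := isUnit_psqrt hmdet hm
  set X := b * s * b with hXdef
  have hX : X.PosSemidef := by
    have := hsPSD.mul_mul_conjTranspose_same b
    rwa [hbH] at this
  have hXv : X * v⁻¹ * X = u := by
    have hvi : v⁻¹ = b⁻¹ * b⁻¹ := by rw [← hbb, Matrix.mul_inv_rev]
    rw [hXdef, hvi,
      show b * s * b * (b⁻¹ * b⁻¹) * (b * s * b)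
          = b * (s * ((b * b⁻¹) * ((b⁻¹ * b) * (s * b)))) from by
        simp only [Matrix.mul_assoc],
      Matrix.mul_nonsing_inv _ hbdet, Matrix.nonsing_inv_mul _ hbdet,
      Matrix.one_mul, Matrix.one_mul,
      show b * (s * (s * b)) = b * (s * s) * b from by simp only [Matrix.mul_assoc],
      hss,
      show b * (b⁻¹ * u * b⁻¹) * b = (b * b⁻¹) * (u * (b⁻¹ * b)) from by
        simp only [Matrix.mul_assoc],
      Matrix.mul_nonsing_inv _ hbdet, Matrix.nonsing_inv_mul _ hbdet,
      Matrix.one_mul, Matrix.mul_one]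
  have hXdet : IsUnit X.det := by
    rw [hXdef, Matrix.det_mul, Matrix.det_mul]
    exact (hbdet.mul hsdet).mul hbdet
  have hui : u⁻¹ = X⁻¹ * v * X⁻¹ := by
    apply Matrix.inv_eq_right_inv
    rw [← hXv,
      show X * v⁻¹ * X * (X⁻¹ * v * X⁻¹) = X * (v⁻¹ * ((X * X⁻¹) * (v * X⁻¹))) from by
        simp only [Matrix.mul_assoc],
      Matrix.mul_nonsing_inv _ hXdet, Matrix.one_mul,
      show X * (v⁻¹ * (v * X⁻¹)) = X * ((v⁻¹ * v) * X⁻¹) from by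
        simp only [Matrix.mul_assoc],
      Matrix.nonsing_inv_mul _ hv.det_pos.ne'.isUnit, Matrix.one_mul,
      Matrix.mul_nonsing_inv _ hXdet]
  have hric : X * u⁻¹ * X = v := by
    rw [hui,
      show X * (X⁻¹ * v * X⁻¹) * X = (X * X⁻¹) * (v * (X⁻¹ * X)) from by
        simp only [Matrix.mul_assoc],
      Matrix.mul_nonsing_inv _ hXdet, Matrix.nonsing_inv_mul _ hXdet,
      Matrix.one_mul, Matrix.mul_one]
  exact eq_geom_of_riccati hu hv.posSemidef hX hric
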